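/- arXiv:1612.02134 — 2 statements merged into one kernel-verified Lean document; each statement's English description precedes it below -/
import Mathlib

section
/- Let p,q be positive coprime integers and s a positive integer. With λ_j = (3(1+s-2j)²p² + 2(2+3s-6j)pq + 3q²)/(48pq) for 1 ≤ j ≤ s, the identity h_{p-2,q-s} = (12/s)·Σ_{j=1}^s λ_j + 1 - s holds, where h_{m,n} = ((np - mq)² - (p-q)²)/(4pq). -/
lemma sum_icc_id (s : ℕ) : ∑ j ∈ Finset.Icc 1 s, (j : ℚ) = s * (s + 1) / 2 := by
  induction s with
  | zero => simp
  | succ n ih =>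
      rw [Finset.sum_Icc_succ_top (by omega), ih]
      push_cast
      ring

lemma sum_icc_sq (s : ℕ) :
    ∑ j ∈ Finset.Icc 1 s, (j : ℚ)^2 = s * (s + 1) * (2 * s + 1) / 6 := by
  induction s with
  | zero => simp
  | succ n ih =>
      rw [Finset.sum_Icc_succ_top (by omega), ih]
      push_cast
      ring

theorem monic_formula_case1
    (p q : ℤ) (hp : 0 < p) (hq : 0 < q) (hpq : IsCoprime p q) (s : ℕ) (hs : 0 < s) :
    ((((q : ℚ) - (s : ℚ)) * p - ((p : ℚ) - 2) * q)^2 - ((p : ℚ) - q)^2) / (4 * p * q)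
      = (12 / (s : ℚ)) *
          (∑ j ∈ Finset.Icc 1 s,
            (3 * (1 + (s : ℚ) - 2 * (j : ℚ))^2 * p^2
              + 2 * (2 + 3 * (s : ℚ) - 6 * (j : ℚ)) * p * q + 3 * q^2) / (48 * p * q))
        + 1 - s := by
  have hp' : (p : ℚ) ≠ 0 := Int.cast_ne_zero.mpr hp.ne'
  have hq' : (q : ℚ) ≠ 0 := Int.cast_ne_zero.mpr hq.ne'
  have hs' : (s : ℚ) ≠ 0 := Nat.cast_ne_zero.mpr hs.ne'
  have hsum : (∑ j ∈ Finset.Icc 1 s,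
      (3 * (1 + (s : ℚ) - 2 * (j : ℚ))^2 * p^2
        + 2 * (2 + 3 * (s : ℚ) - 6 * (j : ℚ)) * p * q + 3 * q^2) / (48 * p * q))
      = ∑ j ∈ Finset.Icc 1 s,
        ((3 * (1 + (s : ℚ))^2 * p^2 + 2 * (2 + 3 * (s : ℚ)) * p * q + 3 * q^2)
            / (48 * p * q)
          + ((-12 * (1 + (s : ℚ)) * p^2 - 12 * p * q) / (48 * p * q)) * (j : ℚ)
          + (12 * (p : ℚ)^2 / (48 * p * q)) * (j : ℚ)^2) := by
    refine Finset.sum_congr rfl fun j _ => ?_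
    field_simp
    ring
  rw [hsum]
  simp only [Finset.sum_add_distrib, ← Finset.mul_sum, Finset.sum_const, Nat.card_Icc,
    sum_icc_id, sum_icc_sq, nsmul_eq_mul]
  have hcard : ((s + 1 - 1 : ℕ) : ℚ) = s := by
    push_cast [Nat.add_sub_cancel]; ring
  rw [hcard]
  field_simp
  ring
end

section
/- Let r > 3 be a prime, q a positive integer divisible by r, n an odd integer with n ≤ q - 3, and set n₁ = (n+1)/2, n₂ = n₁ + 1, n₃ = n₁ + 2. Then r cannot divide all three of 12n₁² - n² + 1, 12n₂² - n² + 1, and 12n₃² - n² + 1. -/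
theorem qdiv_key
    (r : ℤ) (hr : Prime r) (hr3 : 3 < r)
    (q : ℤ) (hq : 0 < q) (hrq : r ∣ q)
    (n : ℤ) (hnodd : Odd n) (hn : n ≤ q - 3) :
    ¬ (r ∣ (12 * ((n + 1) / 2)^2 - n^2 + 1)
        ∧ r ∣ (12 * ((n + 1) / 2 + 1)^2 - n^2 + 1)
        ∧ r ∣ (12 * ((n + 1) / 2 + 2)^2 - n^2 + 1)) := by
  rintro ⟨h1, h2, h3⟩
  set m := (n + 1) / 2 with hm
  have d1 : r ∣ 12 * (2 * m + 1) := by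
    have := dvd_sub h2 h1; convert this using 1; rfl; ring
  have d2 : r ∣ 12 * (2 * m + 3) := by
    have := dvd_sub h3 h2; convert this using 1; rfl; ring
  have d24 : r ∣ 24 := by
    have := dvd_sub d2 d1; convert this using 1; rfl; ring
  have hle : r ≤ 24 := Int.le_of_dvd (by norm_num) d24
  interval_cases r <;> revert hr d24 <;> norm_num
end
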